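/- arXiv:2209.05391 — 9 statements merged into one kernel-verified Lean document; each statement's English description precedes it below -/
import Mathlib

section
/- For n ∈ {2, 3}, every element of the subgroup Gₙ of permutations of F₂ⁿ generated by all CNOT and Toffoli permutations fixes the zero vector, and the group of permutations of F₂ⁿ ∖ {0} obtained by restricting elements of Gₙ to the nonzero vectors is exactly the full symmetric group on F₂ⁿ ∖ {0}. (For n = 2 there are no Toffoli gates, so Gₙ is generated by CNOT permutations alone.) -/
/-- A permutation of `Fin n → ZMod 2` is a CNOT permutation with control `i`
and target `j` (for some distinct `i ≠ j`). -/
def IsCnotPerm {n : ℕ} (π : Equiv.Perm (Fin n → ZMod 2)) : Prop :=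
  ∃ i j : Fin n, i ≠ j ∧ ∀ x, π x = Function.update x j (x j + x i)

/-- A permutation of `Fin n → ZMod 2` is a Toffoli permutation with controls
`i, j` and target `k` (for some pairwise distinct `i, j, k`). -/
def IsToffoliPerm {n : ℕ} (π : Equiv.Perm (Fin n → ZMod 2)) : Prop :=
  ∃ i j k : Fin n, i ≠ j ∧ i ≠ k ∧ j ≠ k ∧
    ∀ x, π x = Function.update x k (x k + x i * x j)

/-- The group `Gₙ` generated by all CNOT and Toffoli permutations on `n` qubits. -/
def gateGroup (n : ℕ) : Subgroup (Equiv.Perm (Fin n → ZMod 2)) :=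
  Subgroup.closure {π | IsCnotPerm π ∨ IsToffoliPerm π}

namespace GateAux

lemma add2 : ∀ a b : ZMod 2, a + b + b = a := by decide

def cnotPerm {n : ℕ} (i j : Fin n) (h : i ≠ j) : Equiv.Perm (Fin n → ZMod 2) :=
  Function.Involutive.toPerm (fun x => Function.update x j (x j + x i)) (by
    intro x; funext k
    rcases eq_or_ne k j with rfl | hk
    · simp [Function.update_apply, h, add2]
    · simp [Function.update_of_ne hk])

def toffoliPerm {n : ℕ} (i j k : Fin n) (hik : i ≠ k) (hjk : j ≠ k) :
    Equiv.Perm (Fin n → ZMod 2) :=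
  Function.Involutive.toPerm (fun x => Function.update x k (x k + x i * x j)) (by
    intro x; funext m
    rcases eq_or_ne m k with rfl | hm
    · simp [Function.update_apply, hik, hjk, add2]
    · simp [Function.update_of_ne hm])

lemma cnot_mem {n : ℕ} (i j : Fin n) (h : i ≠ j) : cnotPerm i j h ∈ gateGroup n :=
  Subgroup.subset_closure (Or.inl ⟨i, j, h, fun _ => rfl⟩)

lemma toffoli_mem {n : ℕ} (i j k : Fin n) (hij : i ≠ j) (hik : i ≠ k) (hjk : j ≠ k) :
    toffoliPerm i j k hik hjk ∈ gateGroup n :=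
  Subgroup.subset_closure (Or.inr ⟨i, j, k, hij, hik, hjk, fun _ => rfl⟩)

/-! ### n = 2 -/

def a01 : Equiv.Perm (Fin 2 → ZMod 2) := cnotPerm 0 1 (by decide)
def a10 : Equiv.Perm (Fin 2 → ZMod 2) := cnotPerm 1 0 (by decide)

lemma ha01 : a01 ∈ gateGroup 2 := cnot_mem _ _ _
lemma ha10 : a10 ∈ gateGroup 2 := cnot_mem _ _ _

lemma enum2 : ∀ a : Fin 2 → ZMod 2, a ≠ 0 → a = ![0,1] ∨ a = ![1,0] ∨ a = ![1,1] := by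
  decide

lemma m2a : Equiv.swap (![1,0] : Fin 2 → ZMod 2) ![1,1] ∈ gateGroup 2 := by
  rw [(by decide : Equiv.swap (![1,0] : Fin 2 → ZMod 2) ![1,1] = a01)]; exact ha01

lemma m2b : Equiv.swap (![0,1] : Fin 2 → ZMod 2) ![1,1] ∈ gateGroup 2 := by
  rw [(by decide : Equiv.swap (![0,1] : Fin 2 → ZMod 2) ![1,1] = a10)]; exact ha10

lemma m2c : Equiv.swap (![0,1] : Fin 2 → ZMod 2) ![1,0] ∈ gateGroup 2 := by
  rw [(by decide : Equiv.swap (![0,1] : Fin 2 → ZMod 2) ![1,0] = a01 * a10 * a01)]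
  exact mul_mem (mul_mem ha01 ha10) ha01

lemma swap_comm_mem {n : ℕ} {a b : Fin n → ZMod 2} (h : Equiv.swap a b ∈ gateGroup n) :
    Equiv.swap b a ∈ gateGroup n := by rwa [Equiv.swap_comm]

lemma swap2 : ∀ a b : Fin 2 → ZMod 2, a ≠ 0 → b ≠ 0 → a ≠ b →
    Equiv.swap a b ∈ gateGroup 2 := by
  intro a b ha hb hab
  rcases enum2 a ha with rfl | rfl | rfl <;> rcases enum2 b hb with rfl | rfl | rfl <;>
    first
      | exact absurd rfl hab
      | exact m2a | exact m2b | exact m2c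
      | exact swap_comm_mem m2a | exact swap_comm_mem m2b | exact swap_comm_mem m2c

/-! ### n = 3 -/

def c01 : Equiv.Perm (Fin 3 → ZMod 2) := cnotPerm 0 1 (by decide)
def c02 : Equiv.Perm (Fin 3 → ZMod 2) := cnotPerm 0 2 (by decide)
def c10 : Equiv.Perm (Fin 3 → ZMod 2) := cnotPerm 1 0 (by decide)
def c12 : Equiv.Perm (Fin 3 → ZMod 2) := cnotPerm 1 2 (by decide)
def c20 : Equiv.Perm (Fin 3 → ZMod 2) := cnotPerm 2 0 (by decide)
def c21 : Equiv.Perm (Fin 3 → ZMod 2) := cnotPerm 2 1 (by decide)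
def t : Equiv.Perm (Fin 3 → ZMod 2) := toffoliPerm 0 1 2 (by decide) (by decide)

lemma hc01 : c01 ∈ gateGroup 3 := cnot_mem _ _ _
lemma hc02 : c02 ∈ gateGroup 3 := cnot_mem _ _ _
lemma hc10 : c10 ∈ gateGroup 3 := cnot_mem _ _ _
lemma hc12 : c12 ∈ gateGroup 3 := cnot_mem _ _ _
lemma hc20 : c20 ∈ gateGroup 3 := cnot_mem _ _ _
lemma hc21 : c21 ∈ gateGroup 3 := cnot_mem _ _ _
lemma ht : t ∈ gateGroup 3 := toffoli_mem _ _ _ (by decide) _ _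

lemma enum3 : ∀ a : Fin 3 → ZMod 2, a ≠ 0 → a = ![0,0,1] ∨ a = ![0,1,0] ∨ a = ![0,1,1] ∨ a = ![1,0,0] ∨ a = ![1,0,1] ∨ a = ![1,1,0] ∨ a = ![1,1,1] := by
  decide

lemma m001010 : Equiv.swap (![0,0,1] : Fin 3 → ZMod 2) ![0,1,0] ∈ gateGroup 3 := by
  rw [(by decide : Equiv.swap (![0,0,1] : Fin 3 → ZMod 2) ![0,1,0] = c21 * c10 * c02 * t * c02 * c10 * c21)]
  exact mul_mem (mul_mem (mul_mem (mul_mem (mul_mem (mul_mem (hc21) hc10) hc02) ht) hc02) hc10) hc21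

lemma m001011 : Equiv.swap (![0,0,1] : Fin 3 → ZMod 2) ![0,1,1] ∈ gateGroup 3 := by
  rw [(by decide : Equiv.swap (![0,0,1] : Fin 3 → ZMod 2) ![0,1,1] = c12 * c21 * c10 * c02 * t * c02 * c10 * c21 * c12)]
  exact mul_mem (mul_mem (mul_mem (mul_mem (mul_mem (mul_mem (mul_mem (mul_mem (hc12) hc21) hc10) hc02) ht) hc02) hc10) hc21) hc12

lemma m001100 : Equiv.swap (![0,0,1] : Fin 3 → ZMod 2) ![1,0,0] ∈ gateGroup 3 := by
  rw [(by decide : Equiv.swap (![0,0,1] : Fin 3 → ZMod 2) ![1,0,0] = c20 * c02 * c01 * t * c01 * c02 * c20)]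
  exact mul_mem (mul_mem (mul_mem (mul_mem (mul_mem (mul_mem (hc20) hc02) hc01) ht) hc01) hc02) hc20

lemma m001101 : Equiv.swap (![0,0,1] : Fin 3 → ZMod 2) ![1,0,1] ∈ gateGroup 3 := by
  rw [(by decide : Equiv.swap (![0,0,1] : Fin 3 → ZMod 2) ![1,0,1] = c02 * c20 * c02 * c01 * t * c01 * c02 * c20 * c02)]
  exact mul_mem (mul_mem (mul_mem (mul_mem (mul_mem (mul_mem (mul_mem (mul_mem (hc02) hc20) hc02) hc01) ht) hc01) hc02) hc20) hc02

lemma m001110 : Equiv.swap (![0,0,1] : Fin 3 → ZMod 2) ![1,1,0] ∈ gateGroup 3 := by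
  rw [(by decide : Equiv.swap (![0,0,1] : Fin 3 → ZMod 2) ![1,1,0] = c21 * c20 * c02 * t * c02 * c20 * c21)]
  exact mul_mem (mul_mem (mul_mem (mul_mem (mul_mem (mul_mem (hc21) hc20) hc02) ht) hc02) hc20) hc21

lemma m001111 : Equiv.swap (![0,0,1] : Fin 3 → ZMod 2) ![1,1,1] ∈ gateGroup 3 := by
  rw [(by decide : Equiv.swap (![0,0,1] : Fin 3 → ZMod 2) ![1,1,1] = c02 * c21 * c20 * c02 * t * c02 * c20 * c21 * c02)]
  exact mul_mem (mul_mem (mul_mem (mul_mem (mul_mem (mul_mem (mul_mem (mul_mem (hc02) hc21) hc20) hc02) ht) hc02) hc20) hc21) hc02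

lemma m010011 : Equiv.swap (![0,1,0] : Fin 3 → ZMod 2) ![0,1,1] ∈ gateGroup 3 := by
  rw [(by decide : Equiv.swap (![0,1,0] : Fin 3 → ZMod 2) ![0,1,1] = c10 * t * c10)]
  exact mul_mem (mul_mem (hc10) ht) hc10

lemma m010100 : Equiv.swap (![0,1,0] : Fin 3 → ZMod 2) ![1,0,0] ∈ gateGroup 3 := by
  rw [(by decide : Equiv.swap (![0,1,0] : Fin 3 → ZMod 2) ![1,0,0] = c02 * c10 * c21 * t * c21 * c10 * c02)]
  exact mul_mem (mul_mem (mul_mem (mul_mem (mul_mem (mul_mem (hc02) hc10) hc21) ht) hc21) hc10) hc02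

lemma m010101 : Equiv.swap (![0,1,0] : Fin 3 → ZMod 2) ![1,0,1] ∈ gateGroup 3 := by
  rw [(by decide : Equiv.swap (![0,1,0] : Fin 3 → ZMod 2) ![1,0,1] = c10 * c21 * t * c21 * c10)]
  exact mul_mem (mul_mem (mul_mem (mul_mem (hc10) hc21) ht) hc21) hc10

lemma m010110 : Equiv.swap (![0,1,0] : Fin 3 → ZMod 2) ![1,1,0] ∈ gateGroup 3 := by
  rw [(by decide : Equiv.swap (![0,1,0] : Fin 3 → ZMod 2) ![1,1,0] = c02 * c20 * c10 * t * c10 * c20 * c02)]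
  exact mul_mem (mul_mem (mul_mem (mul_mem (mul_mem (mul_mem (hc02) hc20) hc10) ht) hc10) hc20) hc02

lemma m010111 : Equiv.swap (![0,1,0] : Fin 3 → ZMod 2) ![1,1,1] ∈ gateGroup 3 := by
  rw [(by decide : Equiv.swap (![0,1,0] : Fin 3 → ZMod 2) ![1,1,1] = c20 * c10 * t * c10 * c20)]
  exact mul_mem (mul_mem (mul_mem (mul_mem (hc20) hc10) ht) hc10) hc20

lemma m011100 : Equiv.swap (![0,1,1] : Fin 3 → ZMod 2) ![1,0,0] ∈ gateGroup 3 := by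
  rw [(by decide : Equiv.swap (![0,1,1] : Fin 3 → ZMod 2) ![1,0,0] = c01 * c20 * c02 * t * c02 * c20 * c01)]
  exact mul_mem (mul_mem (mul_mem (mul_mem (mul_mem (mul_mem (hc01) hc20) hc02) ht) hc02) hc20) hc01

lemma m011101 : Equiv.swap (![0,1,1] : Fin 3 → ZMod 2) ![1,0,1] ∈ gateGroup 3 := by
  rw [(by decide : Equiv.swap (![0,1,1] : Fin 3 → ZMod 2) ![1,0,1] = c12 * c10 * c21 * t * c21 * c10 * c12)]
  exact mul_mem (mul_mem (mul_mem (mul_mem (mul_mem (mul_mem (hc12) hc10) hc21) ht) hc21) hc10) hc12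

lemma m011110 : Equiv.swap (![0,1,1] : Fin 3 → ZMod 2) ![1,1,0] ∈ gateGroup 3 := by
  rw [(by decide : Equiv.swap (![0,1,1] : Fin 3 → ZMod 2) ![1,1,0] = c20 * c02 * t * c02 * c20)]
  exact mul_mem (mul_mem (mul_mem (mul_mem (hc20) hc02) ht) hc02) hc20

lemma m011111 : Equiv.swap (![0,1,1] : Fin 3 → ZMod 2) ![1,1,1] ∈ gateGroup 3 := by
  rw [(by decide : Equiv.swap (![0,1,1] : Fin 3 → ZMod 2) ![1,1,1] = c02 * c20 * c02 * t * c02 * c20 * c02)]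
  exact mul_mem (mul_mem (mul_mem (mul_mem (mul_mem (mul_mem (hc02) hc20) hc02) ht) hc02) hc20) hc02

lemma m100101 : Equiv.swap (![1,0,0] : Fin 3 → ZMod 2) ![1,0,1] ∈ gateGroup 3 := by
  rw [(by decide : Equiv.swap (![1,0,0] : Fin 3 → ZMod 2) ![1,0,1] = c01 * t * c01)]
  exact mul_mem (mul_mem (hc01) ht) hc01

lemma m100110 : Equiv.swap (![1,0,0] : Fin 3 → ZMod 2) ![1,1,0] ∈ gateGroup 3 := by
  rw [(by decide : Equiv.swap (![1,0,0] : Fin 3 → ZMod 2) ![1,1,0] = c12 * c21 * c01 * t * c01 * c21 * c12)]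
  exact mul_mem (mul_mem (mul_mem (mul_mem (mul_mem (mul_mem (hc12) hc21) hc01) ht) hc01) hc21) hc12

lemma m100111 : Equiv.swap (![1,0,0] : Fin 3 → ZMod 2) ![1,1,1] ∈ gateGroup 3 := by
  rw [(by decide : Equiv.swap (![1,0,0] : Fin 3 → ZMod 2) ![1,1,1] = c21 * c01 * t * c01 * c21)]
  exact mul_mem (mul_mem (mul_mem (mul_mem (hc21) hc01) ht) hc01) hc21

lemma m101110 : Equiv.swap (![1,0,1] : Fin 3 → ZMod 2) ![1,1,0] ∈ gateGroup 3 := by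
  rw [(by decide : Equiv.swap (![1,0,1] : Fin 3 → ZMod 2) ![1,1,0] = c21 * c02 * t * c02 * c21)]
  exact mul_mem (mul_mem (mul_mem (mul_mem (hc21) hc02) ht) hc02) hc21

lemma m101111 : Equiv.swap (![1,0,1] : Fin 3 → ZMod 2) ![1,1,1] ∈ gateGroup 3 := by
  rw [(by decide : Equiv.swap (![1,0,1] : Fin 3 → ZMod 2) ![1,1,1] = c12 * c21 * c02 * t * c02 * c21 * c12)]
  exact mul_mem (mul_mem (mul_mem (mul_mem (mul_mem (mul_mem (hc12) hc21) hc02) ht) hc02) hc21) hc12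

lemma m111110 : Equiv.swap (![1,1,1] : Fin 3 → ZMod 2) ![1,1,0] ∈ gateGroup 3 := by
  rw [(by decide : Equiv.swap (![1,1,1] : Fin 3 → ZMod 2) ![1,1,0] = c02 * t * c02)]
  exact mul_mem (mul_mem (hc02) ht) hc02

lemma swap3 : ∀ a b : Fin 3 → ZMod 2, a ≠ 0 → b ≠ 0 → a ≠ b →
    Equiv.swap a b ∈ gateGroup 3 := by
  intro a b ha hb hab
  rcases enum3 a ha with rfl | rfl | rfl | rfl | rfl | rfl | rfl <;>
    rcases enum3 b hb with rfl | rfl | rfl | rfl | rfl | rfl | rfl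
  exacts [absurd rfl hab,
    m001010,
    m001011,
    m001100,
    m001101,
    m001110,
    m001111,
    swap_comm_mem m001010,
    absurd rfl hab,
    m010011,
    m010100,
    m010101,
    m010110,
    m010111,
    swap_comm_mem m001011,
    swap_comm_mem m010011,
    absurd rfl hab,
    m011100,
    m011101,
    m011110,
    m011111,
    swap_comm_mem m001100,
    swap_comm_mem m010100,
    swap_comm_mem m011100,
    absurd rfl hab,
    m100101,
    m100110,
    m100111,
    swap_comm_mem m001101,
    swap_comm_mem m010101,
    swap_comm_mem m011101,
    swap_comm_mem m100101,
    absurd rfl hab,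
    m101110,
    m101111,
    swap_comm_mem m001110,
    swap_comm_mem m010110,
    swap_comm_mem m011110,
    swap_comm_mem m100110,
    swap_comm_mem m101110,
    absurd rfl hab,
    swap_comm_mem m111110,
    swap_comm_mem m001111,
    swap_comm_mem m010111,
    swap_comm_mem m011111,
    swap_comm_mem m100111,
    swap_comm_mem m101111,
    m111110,
    absurd rfl hab]

lemma main (n : ℕ)
    (hswap : ∀ a b : Fin n → ZMod 2, a ≠ 0 → b ≠ 0 → a ≠ b → Equiv.swap a b ∈ gateGroup n) :
    (∀ σ ∈ gateGroup n, σ 0 = 0) ∧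
    (∀ τ : Equiv.Perm {x : Fin n → ZMod 2 // x ≠ 0},
      ∃ σ ∈ gateGroup n,
        ∀ x : {x : Fin n → ZMod 2 // x ≠ 0}, σ x.val = (τ x).val) := by
  constructor
  · intro σ hσ
    induction hσ using Subgroup.closure_induction with
    | mem π hπ =>
        rcases hπ with ⟨i, j, hij, hπ⟩ | ⟨i, j, k, hij, hik, hjk, hπ⟩ <;>
          · rw [hπ]; simp
    | one => rfl
    | mul x y hx hy px py => show x (y 0) = 0; rw [py, px]
    | inv x hx px =>
        show x⁻¹ 0 = 0
        rw [Equiv.Perm.inv_eq_iff_eq]; exact px.symm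
  · intro τ
    refine ⟨Equiv.Perm.ofSubtype τ, ?_, fun x => ?_⟩
    · have h1 : τ ∈ Subgroup.closure
          {σ : Equiv.Perm {x : Fin n → ZMod 2 // x ≠ 0} | σ.IsSwap} := by
        rw [Equiv.Perm.closure_isSwap]; trivial
      induction h1 using Subgroup.closure_induction with
      | mem π hπ =>
          obtain ⟨a, b, hab, rfl⟩ := hπ
          rw [Equiv.Perm.ofSubtype_swap_eq]
          exact hswap a b a.2 b.2 (Subtype.coe_injective.ne hab)
      | one => rw [map_one]; exact one_mem _
      | mul x y hx hy px py => rw [map_mul]; exact mul_mem px py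
      | inv x hx px => rw [map_inv]; exact inv_mem px
    · rw [Equiv.Perm.ofSubtype_apply_of_mem τ x.2, Subtype.coe_eta]

end GateAux

/-- For `n ∈ {2, 3}`: every element of `Gₙ` fixes the zero vector, and the
restrictions of elements of `Gₙ` to the nonzero vectors form the full
symmetric group on `F₂ⁿ \ {0}`: every permutation of the nonzero vectors is
the restriction of some element of `Gₙ`. -/
theorem gateGroup_restriction_eq_symmetric (n : ℕ) (hn : n = 2 ∨ n = 3) :
    (∀ σ ∈ gateGroup n, σ 0 = 0) ∧
    (∀ τ : Equiv.Perm {x : Fin n → ZMod 2 // x ≠ 0},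
      ∃ σ ∈ gateGroup n,
        ∀ x : {x : Fin n → ZMod 2 // x ≠ 0}, σ x.val = (τ x).val) := by
  rcases hn with rfl | rfl
  · exact GateAux.main 2 GateAux.swap2
  · exact GateAux.main 3 GateAux.swap3
end

section
/- For n ≥ 2, the subgroup of permutations of F₂ⁿ generated by all CNOT permutations consists exactly of the F₂-linear automorphisms of F₂ⁿ; that is, a permutation of F₂ⁿ is a product of CNOT permutations if and only if it is an invertible F₂-linear map. In particular this subgroup is isomorphic to GL(n, F₂). -/
namespace CnotAux

variable {n : ℕ}

lemma zmod2_add_self (a : ZMod 2) : a + a = 0 := by revert a; decide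

lemma zmod2_ne_zero {a : ZMod 2} (h : a ≠ 0) : a = 1 := by revert a; decide

/-- The underlying function of a CNOT with control `i` and target `j`. -/
def cnotFun (i j : Fin n) (x : Fin n → ZMod 2) : Fin n → ZMod 2 :=
  Function.update x j (x j + x i)

lemma cnot_invol {i j : Fin n} (hij : i ≠ j) : Function.Involutive (cnotFun i j) := by
  intro x
  funext k
  by_cases hk : k = j
  · subst hk
    simp only [cnotFun, Function.update_self, Function.update_of_ne hij]
    rw [add_assoc, zmod2_add_self, add_zero]
  · simp only [cnotFun, Function.update_of_ne hk]

/-- The CNOT permutation with control `i` and target `j`. -/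
def cnotPerm (i j : Fin n) (hij : i ≠ j) : Equiv.Perm (Fin n → ZMod 2) :=
  (cnot_invol hij).toPerm _

lemma cnotPerm_apply (i j : Fin n) (hij : i ≠ j) (x : Fin n → ZMod 2) :
    cnotPerm i j hij x = Function.update x j (x j + x i) := rfl

lemma isCnotPerm_cnotPerm (i j : Fin n) (hij : i ≠ j) : IsCnotPerm (cnotPerm i j hij) :=
  ⟨i, j, hij, fun _ => rfl⟩

lemma cnot_lin {i j : Fin n} (hij : i ≠ j) :
    IsLinearMap (ZMod 2) (⇑(cnotPerm i j hij)) := by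
  constructor
  · intro x y
    funext k
    simp only [cnotPerm_apply, Pi.add_apply, Function.update_apply]
    by_cases hk : k = j <;> simp [hk] <;> ring
  · intro c x
    funext k
    simp only [cnotPerm_apply, Pi.smul_apply, Function.update_apply, smul_eq_mul]
    by_cases hk : k = j <;> simp [hk, mul_add]

lemma lin_of_mem {σ : Equiv.Perm (Fin n → ZMod 2)}
    (h : σ ∈ Subgroup.closure {π : Equiv.Perm (Fin n → ZMod 2) | IsCnotPerm π}) :
    IsLinearMap (ZMod 2) (⇑σ) := by
  induction h using Subgroup.closure_induction with
  | mem π hπ =>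
    obtain ⟨i, j, hij, hπ⟩ := hπ
    have : π = cnotPerm i j hij := Equiv.ext fun x => hπ x
    rw [this]
    exact cnot_lin hij
  | one => exact ⟨fun _ _ => rfl, fun _ _ => rfl⟩
  | mul a b _ _ ha hb =>
    constructor
    · intro x y
      simp only [Equiv.Perm.mul_apply, hb.map_add, ha.map_add]
    · intro c x
      simp only [Equiv.Perm.mul_apply, hb.map_smul, ha.map_smul]
  | inv a _ ha =>
    constructor
    · intro x y
      apply a.injective
      simp only [ha.map_add, Equiv.Perm.coe_inv, Equiv.apply_symm_apply]
    · intro c x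
      apply a.injective
      simp only [ha.map_smul, Equiv.Perm.coe_inv, Equiv.apply_symm_apply]

/-- The linear equivalence attached to a linear permutation. -/
def permLinEquiv (σ : Equiv.Perm (Fin n → ZMod 2)) (h : IsLinearMap (ZMod 2) (⇑σ)) :
    (Fin n → ZMod 2) ≃ₗ[ZMod 2] (Fin n → ZMod 2) :=
  { σ with map_add' := h.map_add, map_smul' := h.map_smul }

lemma transvection_one_mulVec (i j : Fin n) (x : Fin n → ZMod 2) :
    (Matrix.transvection i j (1 : ZMod 2)).mulVec x
      = Function.update x i (x i + x j) := by
  rw [Matrix.transvection, Matrix.add_mulVec, Matrix.one_mulVec,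
    Matrix.single_mulVec]
  funext k
  by_cases hk : k = i
  · subst hk
    simp
  · simp [Function.update_of_ne hk]

lemma mem_of_lin {σ : Equiv.Perm (Fin n → ZMod 2)}
    (hσ : IsLinearMap (ZMod 2) (⇑σ)) :
    σ ∈ Subgroup.closure {π : Equiv.Perm (Fin n → ZMod 2) | IsCnotPerm π} := by
  set S := {π : Equiv.Perm (Fin n → ZMod 2) | IsCnotPerm π}
  set E := Matrix.GeneralLinearGroup.toLin.trans
    (LinearMap.GeneralLinearGroup.generalLinearEquiv (ZMod 2) (Fin n → ZMod 2)) with hE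
  set g : GL (Fin n) (ZMod 2) := E.symm (permLinEquiv σ hσ) with hg
  have hgσ : ∀ x, (↑g : Matrix (Fin n) (Fin n) (ZMod 2)).mulVec x = σ x := by
    intro x
    have h1 : E g = permLinEquiv σ hσ := E.apply_symm_apply _
    have h2 : (E g) x = (↑g : Matrix (Fin n) (Fin n) (ZMod 2)).mulVec x := rfl
    rw [← h2, h1]; rfl
  have hdet : (↑g : Matrix (Fin n) (Fin n) (ZMod 2)).det ≠ 0 :=
    IsUnit.ne_zero ⟨Matrix.GeneralLinearGroup.det g, rfl⟩
  have main : ∀ A : Matrix (Fin n) (Fin n) (ZMod 2), A.det ≠ 0 →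
      ∃ τ ∈ Subgroup.closure S, ∀ x, τ x = A.mulVec x := by
    intro A hA
    refine Matrix.diagonal_transvection_induction_of_det_ne_zero
      (fun A => ∃ τ ∈ Subgroup.closure S, ∀ x, τ x = A.mulVec x) A hA ?_ ?_ ?_
    · intro D hD

      have hD1 : D = fun _ => 1 := by
        funext i
        apply zmod2_ne_zero
        intro h0
        rw [Matrix.det_diagonal] at hD
        exact hD (Finset.prod_eq_zero (Finset.mem_univ i) h0)
      refine ⟨1, one_mem _, fun x => ?_⟩
      rw [hD1]
      simp [Matrix.diagonal_one]
    · intro t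
      obtain ⟨i, j, hij, c⟩ := t
      rcases (by decide : ∀ c : ZMod 2, c = 0 ∨ c = 1) c with h0 | h1
      · refine ⟨1, one_mem _, fun x => ?_⟩
        simp [Matrix.TransvectionStruct.toMatrix, h0]
      · refine ⟨cnotPerm j i hij.symm, Subgroup.subset_closure (isCnotPerm_cnotPerm _ _ _),
          fun x => ?_⟩
        rw [cnotPerm_apply]
        simp only [Matrix.TransvectionStruct.toMatrix, h1]
        exact (transvection_one_mulVec i j x).symm
    · intro A B hA hB pA pB
      obtain ⟨τA, hτA, hA'⟩ := pA
      obtain ⟨τB, hτB, hB'⟩ := pB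
      refine ⟨τA * τB, mul_mem hτA hτB, fun x => ?_⟩
      rw [Equiv.Perm.mul_apply, hB', hA', Matrix.mulVec_mulVec]
  obtain ⟨τ, hτ, hτσ⟩ := main _ hdet
  have : τ = σ := Equiv.ext fun x => by rw [hτσ, hgσ]
  rwa [this] at hτ

end CnotAux

/-- For `n ≥ 2`, the subgroup generated by the CNOT permutations consists
exactly of the invertible `F₂`-linear maps on `F₂ⁿ`; in particular it is
isomorphic to `GL(n, F₂)`. -/
theorem cnot_closure_eq_linear (n : ℕ) (hn : 2 ≤ n) :
    (∀ σ : Equiv.Perm (Fin n → ZMod 2),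
      σ ∈ Subgroup.closure {π : Equiv.Perm (Fin n → ZMod 2) | IsCnotPerm π} ↔
        IsLinearMap (ZMod 2) (σ : (Fin n → ZMod 2) → (Fin n → ZMod 2))) ∧
    Nonempty
      ((Subgroup.closure {π : Equiv.Perm (Fin n → ZMod 2) | IsCnotPerm π}) ≃*
        GL (Fin n) (ZMod 2)) := by
  refine ⟨fun σ => ⟨CnotAux.lin_of_mem, CnotAux.mem_of_lin⟩, ⟨?_⟩⟩
  let F : (Subgroup.closure {π : Equiv.Perm (Fin n → ZMod 2) | IsCnotPerm π}) →*
      ((Fin n → ZMod 2) ≃ₗ[ZMod 2] (Fin n → ZMod 2)) :=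
    { toFun := fun σ => CnotAux.permLinEquiv σ.1 (CnotAux.lin_of_mem σ.2)
      map_one' := by ext x; rfl
      map_mul' := by intro a b; ext x; rfl }
  have hbij : Function.Bijective F := by
    constructor
    · intro a b hab
      exact Subtype.ext (Equiv.ext fun x => DFunLike.congr_fun hab x)
    · intro e
      have he : IsLinearMap (ZMod 2) (⇑(e.toEquiv : Equiv.Perm (Fin n → ZMod 2))) :=
        ⟨e.map_add, fun c x => e.map_smul c x⟩
      exact ⟨⟨e.toEquiv, CnotAux.mem_of_lin he⟩, by ext x; rfl⟩
  exact (MulEquiv.ofBijective F hbij).trans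
    (Matrix.GeneralLinearGroup.toLin.trans
      (LinearMap.GeneralLinearGroup.generalLinearEquiv (ZMod 2) (Fin n → ZMod 2))).symm
end

section
/- Let n₁, n₂ ≥ 1 and e₁, e₂ ≥ 0. Suppose f : F₂^{n₁} → F₂^{n₁} satisfies: for every x of Hamming weight at most e₁, the first coordinate of f(x) is 0; and suppose g : F₂^{n₂} → F₂^{n₂} satisfies: for every y of Hamming weight at most e₂, the first coordinate of g(y) is 0. Define the composite map on inputs x : Fin n₂ → F₂^{n₁} by first applying f to each block x j, and then applying g to the vector of first coordinates (j ↦ (f (x j)) 0). Then for every input x whose total Hamming weight (the total number of nonzero bits over all n₂ blocks of size n₁) is at most (e₁+1)(e₂+1) − 1, the first coordinate of g (fun j ↦ (f (x j)) 0) is 0. -/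
/-- Composition of purification circuits: feeding the outputs of `n₂` copies of
an `(n₁,1,e₁)` purification map into an `(n₂,1,e₂)` purification map yields an
`(n₁n₂, 1, (e₁+1)(e₂+1)−1)` purification map. -/
theorem purification_composition {n₁ n₂ : ℕ} (h₁ : 1 ≤ n₁) (h₂ : 1 ≤ n₂)
    (e₁ e₂ : ℕ)
    (f : (Fin n₁ → ZMod 2) → (Fin n₁ → ZMod 2))
    (g : (Fin n₂ → ZMod 2) → (Fin n₂ → ZMod 2))
    (hf : ∀ x : Fin n₁ → ZMod 2, hammingNorm x ≤ e₁ → f x ⟨0, h₁⟩ = 0)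
    (hg : ∀ y : Fin n₂ → ZMod 2, hammingNorm y ≤ e₂ → g y ⟨0, h₂⟩ = 0)
    (x : Fin n₂ → Fin n₁ → ZMod 2)
    (hx : ∑ j : Fin n₂, hammingNorm (x j) ≤ (e₁ + 1) * (e₂ + 1) - 1) :
    g (fun j : Fin n₂ => f (x j) ⟨0, h₁⟩) ⟨0, h₂⟩ = 0 := by
  apply hg
  set y : Fin n₂ → ZMod 2 := fun j => f (x j) ⟨0, h₁⟩ with hy
  let S : Finset (Fin n₂) := Finset.univ.filter (fun j => y j ≠ 0)
  have hnorm : hammingNorm y = S.card := rfl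
  rw [hnorm]
  by_contra hcard
  push_neg at hcard
  have hkey : ∀ j ∈ S, e₁ + 1 ≤ hammingNorm (x j) := by
    intro j hj
    by_contra hlt
    push_neg at hlt
    have := hf (x j) (Nat.lt_succ_iff.mp hlt)
    have hj' := (Finset.mem_filter.mp hj).2
    exact hj' this
  have hsum : S.card * (e₁ + 1) ≤ ∑ j : Fin n₂, hammingNorm (x j) := by
    calc S.card * (e₁ + 1) = ∑ _j ∈ S, (e₁ + 1) := by
          rw [Finset.sum_const, smul_eq_mul]
      _ ≤ ∑ j ∈ S, hammingNorm (x j) := Finset.sum_le_sum hkey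
      _ ≤ ∑ j : Fin n₂, hammingNorm (x j) :=
          Finset.sum_le_sum_of_subset (Finset.subset_univ S)
  have h1 : (e₂ + 1) * (e₁ + 1) ≤ S.card * (e₁ + 1) :=
    Nat.mul_le_mul_right _ hcard
  have : (e₁ + 1) * (e₂ + 1) ≤ (e₁ + 1) * (e₂ + 1) - 1 := by
    calc (e₁ + 1) * (e₂ + 1) = (e₂ + 1) * (e₁ + 1) := Nat.mul_comm _ _
      _ ≤ S.card * (e₁ + 1) := h1
      _ ≤ _ := hsum
      _ ≤ _ := hx
  have hP : 1 ≤ (e₁ + 1) * (e₂ + 1) := Nat.one_le_iff_ne_zero.mpr (by positivity)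
  omega
end

section
/- Let G be a finite simple graph with vertex set V. Let v : V → F₂ assign an input error bit to each vertex and let e assign an input error bit to each edge of G. Define, for each vertex u, a(u) = v(u) + Σ(e(ε)) summed over all edges ε of G incident to u, and for each edge ε = {u,w} of G define the output f(ε) = e(ε) + a(u)·a(w), with all arithmetic in F₂ = ZMod 2. If the total number of nonzero input bits (over all vertices and all edges) is at most 1, then f(ε) = 0 for every edge ε of G. -/
/-- Graph construction of purification circuits: one auxiliary bit per vertex,
one data bit per edge.  The detect stage computes, for each vertex `u`,
`a u = v u + Σ e ε` over edges `ε` incident to `u`; the correct stage outputs,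
for each edge `{u,w}`, `f {u,w} = e {u,w} + a u * a w`.  If there is at most
one nonzero input bit in total, then every edge output is `0`. -/
theorem graph_purification_single_error {V : Type*} [Fintype V] [DecidableEq V]
    (G : SimpleGraph V) [DecidableRel G.Adj]
    (v : V → ZMod 2) (e : Sym2 V → ZMod 2)
    (a : V → ZMod 2)
    (ha : ∀ u : V, a u = v u + ∑ ε ∈ G.edgeFinset.filter (fun ε => u ∈ ε), e ε)
    (f : Sym2 V → ZMod 2)
    (hf : ∀ u w : V, G.Adj u w → f s(u, w) = e s(u, w) + a u * a w)
    (herr : (Finset.univ.filter fun u : V => v u ≠ 0).card +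
        (G.edgeFinset.filter fun ε => e ε ≠ 0).card ≤ 1) :
    ∀ ε ∈ G.edgeFinset, f ε = 0 := by
  intro ε hε
  induction ε using Sym2.ind with
  | _ u w =>
  rw [SimpleGraph.mem_edgeFinset, SimpleGraph.mem_edgeSet] at hε
  rw [hf u w hε]
  have hc : ((Finset.univ.filter fun u : V => v u ≠ 0).card = 0 ∧
      (G.edgeFinset.filter fun ε => e ε ≠ 0).card = 0) ∨
      ((Finset.univ.filter fun u : V => v u ≠ 0).card = 1 ∧
      (G.edgeFinset.filter fun ε => e ε ≠ 0).card = 0) ∨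
      ((Finset.univ.filter fun u : V => v u ≠ 0).card = 0 ∧
      (G.edgeFinset.filter fun ε => e ε ≠ 0).card = 1) := by omega
  -- helpers for card = 0 cases
  have hv0 : (Finset.univ.filter fun u : V => v u ≠ 0).card = 0 → ∀ x, v x = 0 := by
    intro h x
    rw [Finset.card_eq_zero, Finset.filter_eq_empty_iff] at h
    have := h (Finset.mem_univ x)
    simpa using this
  have he0 : (G.edgeFinset.filter fun ε => e ε ≠ 0).card = 0 →
      ∀ ε' ∈ G.edgeFinset, e ε' = 0 := by
    intro h ε' hε'
    rw [Finset.card_eq_zero, Finset.filter_eq_empty_iff] at h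
    have := h hε'
    simpa using this
  have hmem : s(u, w) ∈ G.edgeFinset := by
    rw [SimpleGraph.mem_edgeFinset, SimpleGraph.mem_edgeSet]; exact hε
  rcases hc with ⟨h1, h2⟩ | ⟨h1, h2⟩ | ⟨h1, h2⟩
  · -- no errors
    have have0 : ∀ x, a x = 0 := by
      intro x
      rw [ha x, hv0 h1 x, Finset.sum_eq_zero, add_zero]
      intro ε' hε'
      exact he0 h2 ε' (Finset.mem_of_mem_filter _ hε')
    rw [he0 h2 _ hmem, have0 u, have0 w]; ring
  · -- one vertex error
    have hea : ∀ x, a x = v x := by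
      intro x
      rw [ha x, Finset.sum_eq_zero, add_zero]
      intro ε' hε'
      exact he0 h2 ε' (Finset.mem_of_mem_filter _ hε')
    rw [he0 h2 _ hmem, hea u, hea w, zero_add]
    obtain ⟨x, hx⟩ := Finset.card_eq_one.mp h1
    have hone : ∀ y, v y ≠ 0 → y = x := by
      intro y hy
      have : y ∈ Finset.univ.filter fun u : V => v u ≠ 0 := by
        simp [hy]
      rw [hx] at this
      simpa using this
    have hne : u ≠ w := hε.ne
    by_cases hu : v u = 0
    · rw [hu, zero_mul]
    · have hw : v w = 0 := by
        by_contra hw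
        exact hne ((hone u hu).trans (hone w hw).symm)
      rw [hw, mul_zero]
  · -- one edge error
    obtain ⟨ε0, hε0⟩ := Finset.card_eq_one.mp h2
    have hε0mem : ε0 ∈ G.edgeFinset ∧ e ε0 ≠ 0 := by
      have : ε0 ∈ G.edgeFinset.filter fun ε => e ε ≠ 0 := by rw [hε0]; simp
      simpa using this
    have hz : ∀ x : ZMod 2, x ≠ 0 → x = 1 := by decide
    have he1 : e ε0 = 1 := hz _ hε0mem.2
    have hother : ∀ ε' ∈ G.edgeFinset, ε' ≠ ε0 → e ε' = 0 := by
      intro ε' h h'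
      by_contra hne
      have : ε' ∈ G.edgeFinset.filter fun ε => e ε ≠ 0 := by simp [h, hne]
      rw [hε0] at this
      exact h' (by simpa using this)
    have haxall : ∀ x, a x = if x ∈ ε0 then 1 else 0 := by
      intro x
      rw [ha x, hv0 h1 x, zero_add]
      have hcong : ∀ ε' ∈ G.edgeFinset.filter (fun ε => x ∈ ε),
          e ε' = if ε' = ε0 then 1 else 0 := by
        intro ε' h
        by_cases h' : ε' = ε0
        · simp [h', he1]
        · simp [h', hother ε' (Finset.mem_of_mem_filter _ h) h']
      rw [Finset.sum_congr rfl hcong, Finset.sum_ite_eq' _ ε0 (fun _ => (1 : ZMod 2))]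
      simp [Finset.mem_filter, hε0mem.1]
    by_cases hcase : s(u, w) = ε0
    · have hu : u ∈ ε0 := hcase ▸ Sym2.mem_mk_left u w
      have hw : w ∈ ε0 := hcase ▸ Sym2.mem_mk_right u w
      rw [hcase, he1, haxall u, haxall w, if_pos hu, if_pos hw]
      decide
    · rw [hother _ hmem hcase, haxall u, haxall w, zero_add]
      have hnb : ¬(u ∈ ε0 ∧ w ∈ ε0) := by
        rintro ⟨hu, hw⟩
        induction ε0 using Sym2.ind with
        | _ x y =>
        rw [Sym2.mem_iff] at hu hw
        have hne : u ≠ w := hε.ne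
        apply hcase
        rcases hu with rfl | rfl <;> rcases hw with rfl | rfl
        · exact absurd rfl hne
        · rfl
        · exact Sym2.eq_swap
        · exact absurd rfl hne
      by_cases hu : u ∈ ε0
      · have hw : w ∉ ε0 := fun hw => hnb ⟨hu, hw⟩
        rw [if_neg hw, mul_zero]
      · rw [if_neg hu, zero_mul]
end

section
/- Let n ≥ 3 and let indices range over ZMod n. Let v, e : ZMod n → F₂ be input vertex and edge error bits. Define a i = v i + e (i−1) + e i, b i = a i + e (i−1)·e i, and f i = e i + b i · b (i+1), all in F₂. Then the number of indices i with f i = 1 is at most (the number of indices with v i = 1) plus (the number of indices with e i = 1). -/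
private lemma zmod2_ne_one {x : ZMod 2} (h : x ≠ 1) : x = 0 := by
  revert h; revert x; decide

/-- The extended (fault-tolerant) cycle purification circuit on the cycle with
`n ≥ 3` vertices indexed by `ZMod n` is combinatorially fault-tolerant for any
number of preparation errors: the number of output edge errors is at most the
total number of input errors. -/
theorem extended_cycle_fault_tolerant (n : ℕ) [NeZero n] (hn : 3 ≤ n)
    (v e : ZMod n → ZMod 2) (a b f : ZMod n → ZMod 2)
    (ha : ∀ i : ZMod n, a i = v i + e (i - 1) + e i)
    (hb : ∀ i : ZMod n, b i = a i + e (i - 1) * e i)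
    (hf : ∀ i : ZMod n, f i = e i + b i * b (i + 1)) :
    (Finset.univ.filter fun i : ZMod n => f i = 1).card ≤
      (Finset.univ.filter fun i : ZMod n => v i = 1).card +
        (Finset.univ.filter fun i : ZMod n => e i = 1).card := by
  classical
  set V := Finset.univ.filter fun i : ZMod n => v i = 1 with hV
  set E := Finset.univ.filter fun i : ZMod n => e i = 1 with hE
  set F := Finset.univ.filter fun i : ZMod n => f i = 1 with hF
  -- combined circuit equation
  have hbv : ∀ i : ZMod n, b i = v i + e (i - 1) + e i + e (i - 1) * e i := by
    intro i; rw [hb i, ha i]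
  -- from f i = 1 and e i = 0 we get b i = 1
  have hb1 : ∀ i : ZMod n, f i = 1 → e i = 0 → b i = 1 := by
    intro i hfi hei
    have h := hf i
    rw [hfi, hei, zero_add] at h
    revert h
    generalize b i = x; generalize b (i + 1) = y
    revert x y; decide
  -- charging map
  let φ : ZMod n → ZMod n ⊕ ZMod n := fun i =>
    if e i = 1 then Sum.inr i
    else if e (i - 1) = 1 then
      (if f (i - 1) = 1 then Sum.inl (i - 1) else Sum.inr (i - 1))
    else Sum.inl i
  have hmaps : ∀ i ∈ F, φ i ∈ V.disjSum E := by
    intro i hi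
    have hfi : f i = 1 := (Finset.mem_filter.mp hi).2
    by_cases h1 : e i = 1
    · simp only [φ, if_pos h1]
      exact Finset.inr_mem_disjSum.mpr (Finset.mem_filter.mpr ⟨Finset.mem_univ _, h1⟩)
    · have hei : e i = 0 := zmod2_ne_one h1
      have hbi : b i = 1 := hb1 i hfi hei
      by_cases h2 : e (i - 1) = 1
      · by_cases h3 : f (i - 1) = 1
        · -- need v (i-1) = 1
          have hfp := hf (i - 1)
          rw [h3, h2, sub_add_cancel, hbi, mul_one] at hfp
          have hbp : b (i - 1) = 0 := by
            revert hfp; generalize b (i - 1) = x; revert x; decide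
          have := hbv (i - 1)
          rw [hbp, h2] at this
          have hvp : v (i - 1) = 1 := by
            revert this
            generalize v (i - 1) = x; generalize e (i - 1 - 1) = y
            revert x y; decide
          simp only [φ, if_neg h1, if_pos h2, if_pos h3]
          exact Finset.inl_mem_disjSum.mpr (Finset.mem_filter.mpr ⟨Finset.mem_univ _, hvp⟩)
        · simp only [φ, if_neg h1, if_pos h2, if_neg h3]
          exact Finset.inr_mem_disjSum.mpr (Finset.mem_filter.mpr ⟨Finset.mem_univ _, h2⟩)
      · -- need v i = 1
        have hep : e (i - 1) = 0 := zmod2_ne_one h2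
        have := hbv i
        rw [hbi, hei, hep] at this
        have hvi : v i = 1 := by
          revert this; generalize v i = x; revert x; decide
        simp only [φ, if_neg h1, if_neg h2]
        exact Finset.inl_mem_disjSum.mpr (Finset.mem_filter.mpr ⟨Finset.mem_univ _, hvi⟩)
  have hinj : Set.InjOn φ F := by
    intro i hi j hj hij
    have hfi : f i = 1 := (Finset.mem_filter.mp hi).2
    have hfj : f j = 1 := (Finset.mem_filter.mp hj).2
    simp only [φ] at hij
    by_cases h1i : e i = 1 <;> by_cases h1j : e j = 1 <;>
      simp only [if_pos, if_neg, h1i, h1j, if_true, if_false] at hij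
    · exact Sum.inr.inj hij
    · -- i in branch A, j in B/C/D
      by_cases h2j : e (j - 1) = 1 <;> simp only [if_pos, if_neg, h2j] at hij
      · by_cases h3j : f (j - 1) = 1 <;> simp only [if_pos, if_neg, h3j] at hij
        · exact absurd hij (by simp)
        · -- inr i = inr (j-1): i = j-1, f i = 1 but f (j-1) = 0
          have : i = j - 1 := Sum.inr.inj hij
          exact absurd (this ▸ hfi) h3j
      · exact absurd hij (by simp)
    · -- symmetric: j in A, i in B/C/D
      by_cases h2i : e (i - 1) = 1 <;> simp only [if_pos, if_neg, h2i] at hij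
      · by_cases h3i : f (i - 1) = 1 <;> simp only [if_pos, if_neg, h3i] at hij
        · exact absurd hij (by simp)
        · have : i - 1 = j := Sum.inr.inj hij
          exact absurd (this ▸ hfj) h3i
      · exact absurd hij (by simp)
    · -- both in B/C/D
      by_cases h2i : e (i - 1) = 1 <;> by_cases h2j : e (j - 1) = 1 <;>
        simp only [if_pos, if_neg, h2i, h2j] at hij
      · by_cases h3i : f (i - 1) = 1 <;> by_cases h3j : f (j - 1) = 1 <;>
          simp only [if_pos, if_neg, h3i, h3j] at hij
        · exact sub_left_injective (Sum.inl.inj hij)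
        · exact absurd hij (by simp)
        · exact absurd hij (by simp)
        · exact sub_left_injective (Sum.inr.inj hij)
      · -- i in C/D, j in B: slot is (i-1) vs j
        by_cases h3i : f (i - 1) = 1 <;> simp only [if_pos, if_neg, h3i] at hij
        · -- inl (i-1) = inl j : i-1 = j, but e (i-1) = 1 and e j = 0
          have hq : i - 1 = j := Sum.inl.inj hij
          exact absurd (hq ▸ h2i) h1j
        · exact absurd hij (by simp)
      · by_cases h3j : f (j - 1) = 1 <;> simp only [if_pos, if_neg, h3j] at hij
        · have hq : i = j - 1 := Sum.inl.inj hij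
          exact absurd (hq ▸ h2j) h1i
        · exact absurd hij (by simp)
      · exact Sum.inl.inj hij
  have := Finset.card_le_card_of_injOn φ hmaps hinj
  rwa [Finset.card_disjSum] at this
end

section
/- Let m ≥ 1 and let v, e : ℤ → F₂ be input vertex and edge error bits for a path, with v i = 0 for all i outside {0, …, m} and e i = 0 for all i outside {0, …, m−1}. Define a i = v i + e (i−1) + e i, b i = a i + e (i−1)·e i, and f i = e i + b i · b (i+1), all in F₂. Then the number of integers i with f i = 1 is at most (the number of integers with v i = 1) plus (the number of integers with e i = 1). -/
private lemma zmod2_em (x : ZMod 2) : x = 0 ∨ x = 1 := by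
  revert x; decide

private lemma key_bits : ∀ vi vi1 em1 ei ei1 : ZMod 2,
    ei + (vi + em1 + ei + em1 * ei) * (vi1 + ei + ei1 + ei * ei1) = 1 →
    ((ei = 1 → (vi = 1 ∨ vi1 = 1)) ∧ (ei = 0 → (vi + em1 = 1 ∧ vi1 + ei1 = 1))) := by
  decide

/-- The extended (fault-tolerant) purification circuit over the path with
vertices `0, …, m` and edges `0, …, m−1` is combinatorially fault-tolerant for
any number of preparation errors. -/
theorem extended_path_fault_tolerant (m : ℕ) (hm : 1 ≤ m)
    (v e : ℤ → ZMod 2)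
    (hv : ∀ i : ℤ, (i < 0 ∨ (m : ℤ) < i) → v i = 0)
    (he : ∀ i : ℤ, (i < 0 ∨ (m : ℤ) - 1 < i) → e i = 0)
    (a b f : ℤ → ZMod 2)
    (ha : ∀ i : ℤ, a i = v i + e (i - 1) + e i)
    (hb : ∀ i : ℤ, b i = a i + e (i - 1) * e i)
    (hf : ∀ i : ℤ, f i = e i + b i * b (i + 1)) :
    {i : ℤ | f i = 1}.ncard ≤ {i : ℤ | v i = 1}.ncard + {i : ℤ | e i = 1}.ncard := by
  classical
  have hF : ∀ i : ℤ, f i = e i + (v i + e (i-1) + e i + e (i-1) * e i) *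
      (v (i+1) + e i + e (i+1) + e i * e (i+1)) := by
    intro i
    have h1 : i + 1 - 1 = i := by ring
    rw [hf, hb, ha, hb, ha, h1]
  have key : ∀ i : ℤ, f i = 1 →
      ((e i = 1 → (v i = 1 ∨ v (i+1) = 1)) ∧
       (e i = 0 → (v i + e (i-1) = 1 ∧ v (i+1) + e (i+1) = 1))) := by
    intro i hi
    exact key_bits _ _ _ _ _ (by rw [← hF]; exact hi)
  set V := {i : ℤ | v i = 1} with hVdef
  set E := {i : ℤ | e i = 1} with hEdef
  have hVfin : V.Finite := by
    apply (Set.finite_Icc (0:ℤ) (m:ℤ)).subset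
    intro i hi
    simp only [hVdef, Set.mem_setOf_eq] at hi
    simp only [Set.mem_Icc]
    by_contra hc
    have h0 : v i = 0 := hv i (by omega)
    rw [h0] at hi; exact zero_ne_one hi
  have hEfin : E.Finite := by
    apply (Set.finite_Icc (0:ℤ) ((m:ℤ)-1)).subset
    intro i hi
    simp only [hEdef, Set.mem_setOf_eq] at hi
    simp only [Set.mem_Icc]
    by_contra hc
    have h0 : e i = 0 := he i (by omega)
    rw [h0] at hi; exact zero_ne_one hi
  set g : ℤ → ℤ ⊕ ℤ := fun i =>
    if e i = 1 then
      (if v (i+1) = 1 then (if e (i+1) = 1 then Sum.inr (i+1) else Sum.inl (i+1))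
       else Sum.inl i)
    else (if v (i+1) = 1 then Sum.inl (i+1) else Sum.inr (i+1)) with hgdef
  set T : Set (ℤ ⊕ ℤ) := (Sum.inl '' V) ∪ (Sum.inr '' E) with hTdef
  have hTfin : T.Finite := (hVfin.image _).union (hEfin.image _)
  have hmaps : ∀ i ∈ {i : ℤ | f i = 1}, g i ∈ T := by
    intro i hi
    simp only [Set.mem_setOf_eq] at hi
    obtain ⟨k1, k2⟩ := key i hi
    simp only [hgdef]
    by_cases he1 : e i = 1
    · rw [if_pos he1]
      by_cases hv1 : v (i+1) = 1
      · rw [if_pos hv1]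
        by_cases he2 : e (i+1) = 1
        · rw [if_pos he2]
          exact Or.inr ⟨i+1, he2, rfl⟩
        · rw [if_neg he2]
          exact Or.inl ⟨i+1, hv1, rfl⟩
      · rw [if_neg hv1]
        exact Or.inl ⟨i, (k1 he1).resolve_right hv1, rfl⟩
    · have he0 : e i = 0 := (zmod2_em (e i)).resolve_right he1
      rw [if_neg he1]
      by_cases hv1 : v (i+1) = 1
      · rw [if_pos hv1]
        exact Or.inl ⟨i+1, hv1, rfl⟩
      · rw [if_neg hv1]
        have hv0 : v (i+1) = 0 := (zmod2_em _).resolve_right hv1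
        have h2 := (k2 he0).2
        rw [hv0, zero_add] at h2
        exact Or.inr ⟨i+1, h2, rfl⟩
  have gchar : ∀ i : ℤ, f i = 1 →
      g i = Sum.inr (i+1) ∨ (g i = Sum.inl (i+1) ∧ e (i+1) = 0) ∨
      (g i = Sum.inl i ∧ e i = 1) := by
    intro i hi
    obtain ⟨k1, k2⟩ := key i hi
    simp only [hgdef]
    by_cases he1 : e i = 1
    · rw [if_pos he1]
      by_cases hv1 : v (i+1) = 1
      · rw [if_pos hv1]
        by_cases he2 : e (i+1) = 1
        · rw [if_pos he2]; exact Or.inl rfl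
        · rw [if_neg he2]
          exact Or.inr (Or.inl ⟨rfl, (zmod2_em _).resolve_right he2⟩)
      · rw [if_neg hv1]
        exact Or.inr (Or.inr ⟨rfl, he1⟩)
    · have he0 : e i = 0 := (zmod2_em (e i)).resolve_right he1
      rw [if_neg he1]
      by_cases hv1 : v (i+1) = 1
      · rw [if_pos hv1]
        have h2 := (k2 he0).2
        rw [hv1] at h2
        have he2 : e (i+1) = 0 := by
          rcases zmod2_em (e (i+1)) with h | h
          · exact h
          · rw [h] at h2; exact absurd h2 (by decide)
        exact Or.inr (Or.inl ⟨rfl, he2⟩)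
      · rw [if_neg hv1]
        exact Or.inl rfl
  have hinj : Set.InjOn g {i : ℤ | f i = 1} := by
    intro i hi j hj hij
    simp only [Set.mem_setOf_eq] at hi hj
    rcases gchar i hi with h1 | ⟨h1, h1'⟩ | ⟨h1, h1'⟩ <;>
      rcases gchar j hj with h2 | ⟨h2, h2'⟩ | ⟨h2, h2'⟩ <;>
      rw [h1, h2] at hij <;>
      first
        | (injection hij; done)
        | (injection hij with h; omega)
        | (injection hij with h
           exfalso
           rw [← h, h1'] at h2'
           exact absurd h2' (by decide))
        | (injection hij with h
           exfalso
           rw [h, h2'] at h1'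
           exact absurd h1' (by decide))
  have hcard : {i : ℤ | f i = 1}.ncard ≤ T.ncard :=
    Set.ncard_le_ncard_of_injOn g hmaps hinj hTfin
  have h2 : T.ncard ≤ (Sum.inl '' V).ncard + (Sum.inr '' E).ncard :=
    Set.ncard_union_le _ _
  rw [Set.ncard_image_of_injective V Sum.inl_injective,
      Set.ncard_image_of_injective E Sum.inr_injective] at h2
  exact hcard.trans h2
end

section
/- Let n ≥ 3 and let indices range over ZMod n. Let v, e : ZMod n → F₂, and define a i = v i + e (i−1) + e i, b i = a i + e (i−1)·e i, and f i = e i + b i · b (i+1), all in F₂. If e i = 0 and f i = 1, then (v i = 1 or e (i−1) = 1) and (v (i+1) = 1 or e (i+1) = 1). -/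
/-- In the extended cycle purification circuit, an edge with no input error
experiences an output error only if, for each of its two endpoints, there is
an input error either on that vertex or on the other edge incident to it. -/
theorem extended_cycle_output_error_condition (n : ℕ) (hn : 3 ≤ n)
    (v e : ZMod n → ZMod 2)
    (a b f : ZMod n → ZMod 2)
    (ha : ∀ i : ZMod n, a i = v i + e (i - 1) + e i)
    (hb : ∀ i : ZMod n, b i = a i + e (i - 1) * e i)
    (hf : ∀ i : ZMod n, f i = e i + b i * b (i + 1))
    (i : ZMod n) (hei : e i = 0) (hfi : f i = 1) :
    (v i = 1 ∨ e (i - 1) = 1) ∧ (v (i + 1) = 1 ∨ e (i + 1) = 1) := by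
  have key := hfi
  rw [hf, hb, hb, ha, ha, hei, add_sub_cancel_right, hei] at key
  have two : ∀ u : ZMod 2, u = 0 ∨ u = 1 := by decide
  rcases two (v i) with h1 | h1 <;> rcases two (e (i - 1)) with h2 | h2 <;>
    rcases two (v (i + 1)) with h3 | h3 <;> rcases two (e (i + 1)) with h4 | h4 <;>
    simp_all <;> exact absurd key (by decide)
end

section
/- Let n ≥ 10 and let indices range over ZMod n. Let v, e : ZMod n → F₂ be input vertex and edge error bits, define a i = v i + e (i−1) + e i and f i = e i + a i · a (i+1), all in F₂. If (the number of indices with v i = 1) plus (the number of indices with e i = 1) is at most 3, then the number of indices with f i = 1 is at most (the number of indices with v i = 1) plus (the number of indices with e i = 1). -/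
private lemma zmod_small_ne_zero_cfT {n : ℕ} (hn : 10 ≤ n) (k : ℕ)
    (h1 : 0 < k) (h2 : k < 10) : ((k : ℕ) : ZMod n) ≠ 0 := by
  intro h
  rw [ZMod.natCast_eq_zero_iff] at h
  have := Nat.le_of_dvd h1 h
  omega

/-- In the collision case, once we know the errors are confined as stated,
the output error count is at most 3. -/
private lemma aux_final_cfT {n : ℕ} [NeZero n] (hn : 10 ≤ n)
    (v e a f : ZMod n → ZMod 2)
    (ha : ∀ i : ZMod n, a i = v i + e (i - 1) + e i)
    (hf : ∀ i : ZMod n, f i = e i + a i * a (i + 1))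
    (i : ZMod n) (hai : a i = 1)
    (hV : ∀ j, v j = 1 → j = i ∨ j = i + 2)
    (hE : ∀ j, e j = 1 → j = i - 1 ∨ j = i + 1 ∨ j = i + 2) :
    (Finset.univ.filter fun j : ZMod n => f j = 1).card ≤ 3 := by
  have z01 : ∀ x : ZMod 2, x = 0 ∨ x = 1 := by decide
  have NE : ∀ (x y : ZMod n) (k : ℕ), 0 < k → k < 10 → x - y = (k : ℕ) → x ≠ y := by
    intro x y k h1 h2 hxy h
    exact zmod_small_ne_zero_cfT hn k h1 h2 (by rw [← hxy, h, sub_self])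
  have hv0 : ∀ j, j ≠ i → j ≠ i + 2 → v j = 0 := by
    intro j h1 h2
    rcases z01 (v j) with h | h
    · exact h
    · rcases hV j h with rfl | rfl
      · exact absurd rfl h1
      · exact absurd rfl h2
  have he0 : ∀ j, j ≠ i - 1 → j ≠ i + 1 → j ≠ i + 2 → e j = 0 := by
    intro j h1 h2 h3
    rcases z01 (e j) with h | h
    · exact h
    · rcases hE j h with rfl | rfl | rfl
      · exact absurd rfl h1
      · exact absurd rfl h2
      · exact absurd rfl h3
  have hsub : (Finset.univ.filter fun j : ZMod n => f j = 1) ⊆ {i, i + 1, i + 2} := by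
    intro j hj
    have hfj : f j = 1 := (Finset.mem_filter.1 hj).2
    by_contra hmem
    simp only [Finset.mem_insert, Finset.mem_singleton, not_or] at hmem
    obtain ⟨hj1, hj2, hj3⟩ := hmem
    by_cases hc1 : j = i - 1
    · subst hc1
      have hva : v (i - 1) = 0 :=
        hv0 _ (NE i (i-1) 1 (by norm_num) (by norm_num) (by push_cast; ring)).symm
          (NE (i+2) (i-1) 3 (by norm_num) (by norm_num) (by push_cast; ring)).symm
      have hea : e (i - 1 - 1) = 0 := by
        apply he0
        · exact (NE (i-1) (i-1-1) 1 (by norm_num) (by norm_num) (by push_cast; ring)).symm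
        · exact (NE (i+1) (i-1-1) 3 (by norm_num) (by norm_num) (by push_cast; ring)).symm
        · exact (NE (i+2) (i-1-1) 4 (by norm_num) (by norm_num) (by push_cast; ring)).symm
      have haa : a (i - 1) = e (i - 1) := by rw [ha (i-1), hva, hea, zero_add, zero_add]
      have hfe : f (i - 1) = e (i - 1) + e (i - 1) * 1 := by
        rw [hf (i-1), haa, show i - 1 + 1 = i from by ring, hai]
      rw [hfe] at hfj
      exact absurd hfj (by revert hfj; generalize e (i-1) = x; revert x; decide)
    by_cases hc2 : j = i + 3
    · subst hc2
      have he3 : e (i + 3) = 0 := by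
        apply he0
        · exact (NE (i+3) (i-1) 4 (by norm_num) (by norm_num) (by push_cast; ring))
        · exact (NE (i+3) (i+1) 2 (by norm_num) (by norm_num) (by push_cast; ring))
        · exact (NE (i+3) (i+2) 1 (by norm_num) (by norm_num) (by push_cast; ring))
      have he4 : e (i + 4) = 0 := by
        apply he0
        · exact (NE (i+4) (i-1) 5 (by norm_num) (by norm_num) (by push_cast; ring))
        · exact (NE (i+4) (i+1) 3 (by norm_num) (by norm_num) (by push_cast; ring))
        · exact (NE (i+4) (i+2) 2 (by norm_num) (by norm_num) (by push_cast; ring))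
      have hv4 : v (i + 4) = 0 :=
        hv0 _ (NE (i+4) i 4 (by norm_num) (by norm_num) (by push_cast; ring))
          (NE (i+4) (i+2) 2 (by norm_num) (by norm_num) (by push_cast; ring))
      have ha4 : a (i + 4) = 0 := by
        rw [ha (i+4), show i + 4 - 1 = i + 3 from by ring, hv4, he3, he4]; ring
      have : f (i + 3) = 0 := by
        rw [hf (i+3), show i + 3 + 1 = i + 4 from by ring, he3, ha4, mul_zero, add_zero]
      rw [this] at hfj
      exact absurd hfj (by decide)
    · have hej : e j = 0 := he0 j hc1 hj2 hj3
      have hvj : v j = 0 := hv0 j hj1 hj3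
      have hej1 : e (j - 1) = 0 := by
        apply he0
        · intro h; exact hj1 (by linear_combination h)
        · intro h; exact hj3 (by linear_combination h)
        · intro h; exact hc2 (by linear_combination h)
      have haj : a j = 0 := by rw [ha j, hvj, hej, hej1]; ring
      have : f j = 0 := by rw [hf j, hej, haj, zero_mul, add_zero]
      rw [this] at hfj
      exact absurd hfj (by decide)
  calc (Finset.univ.filter fun j : ZMod n => f j = 1).card
      ≤ ({i, i + 1, i + 2} : Finset (ZMod n)).card := Finset.card_le_card hsub
    _ ≤ 3 := by
        apply le_trans (Finset.card_insert_le _ _)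
        have := Finset.card_insert_le (i+1) ({i+2} : Finset (ZMod n))
        simp only [Finset.card_singleton] at this ⊢
        omega

private lemma no_collision {n : ℕ} [NeZero n]
    (v e : ZMod n → ZMod 2) (a f : ZMod n → ZMod 2)
    (ha : ∀ i : ZMod n, a i = v i + e (i - 1) + e i)
    (hf : ∀ i : ZMod n, f i = e i + a i * a (i + 1))
    (hcol : ¬ ∃ i : ZMod n, f i = 1 ∧ f (i + 1) = 1 ∧ e i = 0 ∧ v (i + 1) = 0 ∧ e (i + 1) = 1) :
    (Finset.univ.filter fun i : ZMod n => f i = 1).card ≤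
      (Finset.univ.filter fun i : ZMod n => v i = 1).card +
        (Finset.univ.filter fun i : ZMod n => e i = 1).card := by
  classical
  have z01 : ∀ x : ZMod 2, x ≠ 1 → x = 0 := by decide
  have zmul : ∀ x y : ZMod 2, x * y = 1 → x = 1 ∧ y = 1 := by decide
  set V := Finset.univ.filter fun i : ZMod n => v i = 1 with hVdef
  set E := Finset.univ.filter fun i : ZMod n => e i = 1 with hEdef
  set φ : ZMod n → ZMod n × Bool := fun j =>
    if e j = 1 then (j, false) else if v (j + 1) = 1 then (j + 1, true) else (j + 1, false)
    with hφ
  have hinj1 : Function.Injective (fun x : ZMod n => (x, true)) :=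
    fun a b h => congrArg Prod.fst h
  have hinj2 : Function.Injective (fun x : ZMod n => (x, false)) :=
    fun a b h => congrArg Prod.fst h
  have hdisj : Disjoint (V.image fun x => (x, true)) (E.image fun x => (x, false)) := by
    rw [Finset.disjoint_left]
    rintro ⟨x, b⟩ h1 h2
    obtain ⟨c, -, hc⟩ := Finset.mem_image.1 h1
    obtain ⟨d, -, hd⟩ := Finset.mem_image.1 h2
    rw [← hc] at hd
    exact absurd (congrArg Prod.snd hd) (by simp)
  have key : (Finset.univ.filter fun i : ZMod n => f i = 1).card ≤
      ((V.image fun x => (x, true)) ∪ (E.image fun x => (x, false))).card := by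
    apply Finset.card_le_card_of_injOn φ
    · intro j hj
      have hfj : f j = 1 := (Finset.mem_filter.1 hj).2
      by_cases hej : e j = 1
      · rw [hφ]; simp only [if_pos hej]
        exact Finset.mem_union_right _
          (Finset.mem_image_of_mem _ (Finset.mem_filter.2 ⟨Finset.mem_univ _, hej⟩))
      · have hej0 : e j = 0 := z01 _ hej
        have hprod : a j * a (j + 1) = 1 := by
          have h := hf j
          rw [hej0, zero_add, hfj] at h
          exact h.symm
        have haj1 : a (j + 1) = 1 := (zmul _ _ hprod).2
        by_cases hvj : v (j + 1) = 1
        · rw [hφ]; simp only [if_neg hej, if_pos hvj]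
          exact Finset.mem_union_left _
            (Finset.mem_image_of_mem _ (Finset.mem_filter.2 ⟨Finset.mem_univ _, hvj⟩))
        · have hvj0 : v (j + 1) = 0 := z01 _ hvj
          have hej1 : e (j + 1) = 1 := by
            have h := ha (j + 1)
            rw [show j + 1 - 1 = j from by ring, hej0, hvj0, haj1] at h
            exact ((by decide : ∀ x : ZMod 2, (1 : ZMod 2) = 0 + 0 + x → x = 1) _ h)
          rw [hφ]; simp only [if_neg hej, if_neg hvj]
          exact Finset.mem_union_right _
            (Finset.mem_image_of_mem _ (Finset.mem_filter.2 ⟨Finset.mem_univ _, hej1⟩))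
    · intro j hj k hk hjk
      have hfj : f j = 1 := (Finset.mem_filter.1 hj).2
      have hfk : f k = 1 := (Finset.mem_filter.1 hk).2
      rw [hφ] at hjk
      by_cases hej : e j = 1 <;> by_cases hek : e k = 1
      · simp only [if_pos hej, if_pos hek, Prod.mk.injEq] at hjk
        exact hjk.1
      · by_cases hvk : v (k + 1) = 1
        · simp only [if_pos hej, if_neg hek, if_pos hvk, Prod.mk.injEq] at hjk
          exact absurd hjk.2 (by decide)
        · simp only [if_pos hej, if_neg hek, if_neg hvk, Prod.mk.injEq] at hjk
          exfalso
          exact hcol ⟨k, hfk, hjk.1 ▸ hfj, z01 _ hek, z01 _ hvk, hjk.1 ▸ hej⟩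
      · by_cases hvj : v (j + 1) = 1
        · simp only [if_neg hej, if_pos hek, if_pos hvj, Prod.mk.injEq] at hjk
          exact absurd hjk.2 (by decide)
        · simp only [if_neg hej, if_pos hek, if_neg hvj, Prod.mk.injEq] at hjk
          exfalso
          exact hcol ⟨j, hfj, hjk.1.symm ▸ hfk, z01 _ hej, z01 _ hvj, hjk.1.symm ▸ hek⟩
      · by_cases hvj : v (j + 1) = 1 <;> by_cases hvk : v (k + 1) = 1
        · simp only [if_neg hej, if_neg hek, if_pos hvj, if_pos hvk, Prod.mk.injEq] at hjk
          exact add_right_cancel hjk.1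
        · simp only [if_neg hej, if_neg hek, if_pos hvj, if_neg hvk, Prod.mk.injEq] at hjk
          exact absurd hjk.2 (by decide)
        · simp only [if_neg hej, if_neg hek, if_neg hvj, if_pos hvk, Prod.mk.injEq] at hjk
          exact absurd hjk.2 (by decide)
        · simp only [if_neg hej, if_neg hek, if_neg hvj, if_neg hvk, Prod.mk.injEq] at hjk
          exact add_right_cancel hjk.1
  have hcard : ((V.image fun x => (x, true)) ∪ (E.image fun x => (x, false))).card
      = V.card + E.card := by
    rw [Finset.card_union_of_disjoint hdisj, Finset.card_image_of_injective _ hinj1,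
      Finset.card_image_of_injective _ hinj2]
  omega


private lemma collision_case (n : ℕ) [NeZero n] (hn : 10 ≤ n)
    (v e : ZMod n → ZMod 2) (a f : ZMod n → ZMod 2)
    (ha : ∀ i : ZMod n, a i = v i + e (i - 1) + e i)
    (hf : ∀ i : ZMod n, f i = e i + a i * a (i + 1))
    (herr : (Finset.univ.filter fun i : ZMod n => v i = 1).card +
        (Finset.univ.filter fun i : ZMod n => e i = 1).card ≤ 3)
    (hcol : ∃ i : ZMod n, f i = 1 ∧ f (i + 1) = 1 ∧ e i = 0 ∧ v (i + 1) = 0 ∧ e (i + 1) = 1) :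
    (Finset.univ.filter fun i : ZMod n => f i = 1).card ≤
      (Finset.univ.filter fun i : ZMod n => v i = 1).card +
        (Finset.univ.filter fun i : ZMod n => e i = 1).card := by
  classical
  obtain ⟨i, hfi, hfi1, hei, hvi1, hei1⟩ := hcol
  have zmul : ∀ x y : ZMod 2, x * y = 1 → x = 1 ∧ y = 1 := by decide
  have hprod : a i * a (i + 1) = 1 := by
    have h := hf i; rw [hei, zero_add, hfi] at h; exact h.symm
  obtain ⟨hai, hai1⟩ := zmul _ _ hprod
  have hai2 : a (i + 2) = 0 := by
    have h := hf (i + 1)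
    rw [show i + 1 + 1 = i + 2 from by ring, hfi1, hei1, hai1, one_mul] at h
    exact (by decide : ∀ x : ZMod 2, (1 : ZMod 2) = 1 + x → x = 0) _ h
  have hx : v i + e (i - 1) = 1 := by
    have h := ha i; rw [hai, hei, add_zero] at h; exact h.symm
  have hy : v (i + 2) + e (i + 2) = 1 := by
    have h := ha (i + 2)
    rw [show i + 2 - 1 = i + 1 from by ring, hai2, hei1] at h
    exact (by decide : ∀ x y : ZMod 2, (0 : ZMod 2) = x + 1 + y → x + y = 1) _ _ h
  have NE : ∀ (x y : ZMod n) (k : ℕ), 0 < k → k < 10 → x - y = (k : ℕ) → x ≠ y := by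
    intro x y k h1 h2 hxy h
    exact zmod_small_ne_zero_cfT hn k h1 h2 (by rw [← hxy, h, sub_self])
  have d1 : i ≠ i + 2 := (NE (i+2) i 2 (by norm_num) (by norm_num) (by push_cast; ring)).symm
  have d2 : i + 1 ≠ i + 2 := (NE (i+2) (i+1) 1 (by norm_num) (by norm_num) (by push_cast; ring)).symm
  have d3 : i - 1 ≠ i + 1 := (NE (i+1) (i-1) 2 (by norm_num) (by norm_num) (by push_cast; ring)).symm
  have d4 : i - 1 ≠ i + 2 := (NE (i+2) (i-1) 3 (by norm_num) (by norm_num) (by push_cast; ring)).symm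
  have hmemv : ∀ j, v j = 1 → j ∈ Finset.univ.filter (fun k : ZMod n => v k = 1) :=
    fun j h => Finset.mem_filter.2 ⟨Finset.mem_univ _, h⟩
  have hmeme : ∀ j, e j = 1 → j ∈ Finset.univ.filter (fun k : ZMod n => e k = 1) :=
    fun j h => Finset.mem_filter.2 ⟨Finset.mem_univ _, h⟩
  have hsplit : ∀ x y : ZMod 2, x + y = 1 → (x = 1 ∧ y = 0) ∨ (x = 0 ∧ y = 1) := by decide
  rcases hsplit _ _ hx with ⟨hX1, hX2⟩ | ⟨hX1, hX2⟩ <;>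
    rcases hsplit _ _ hy with ⟨hY1, hY2⟩ | ⟨hY1, hY2⟩
  · -- V = {i, i+2}, E = {i+1}
    have hWsub : ({i, i + 2} : Finset (ZMod n)) ⊆
        Finset.univ.filter (fun k : ZMod n => v k = 1) := by
      intro j hj
      rcases Finset.mem_insert.1 hj with rfl | hj
      · exact hmemv _ hX1
      · rw [Finset.mem_singleton.1 hj]; exact hmemv _ hY1
    have hYsub : ({i + 1} : Finset (ZMod n)) ⊆
        Finset.univ.filter (fun k : ZMod n => e k = 1) := by
      intro j hj; rw [Finset.mem_singleton.1 hj]; exact hmeme _ hei1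
    have hWc : ({i, i + 2} : Finset (ZMod n)).card = 2 := by
      rw [Finset.card_insert_of_notMem (by simpa using d1), Finset.card_singleton]
    have hYc : ({i + 1} : Finset (ZMod n)).card = 1 := Finset.card_singleton _
    have hV2 := Finset.card_le_card hWsub
    have hE1 := Finset.card_le_card hYsub
    rw [hWc] at hV2; rw [hYc] at hE1
    have hVeq := Finset.eq_of_subset_of_card_le hWsub (by rw [hWc]; omega)
    have hEeq := Finset.eq_of_subset_of_card_le hYsub (by rw [hYc]; omega)
    have hVsub : ∀ j, v j = 1 → j = i ∨ j = i + 2 := by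
      intro j h
      have : j ∈ ({i, i + 2} : Finset (ZMod n)) := by rw [hVeq]; exact hmemv _ h
      simpa using this
    have hEsub : ∀ j, e j = 1 → j = i - 1 ∨ j = i + 1 ∨ j = i + 2 := by
      intro j h
      have : j ∈ ({i + 1} : Finset (ZMod n)) := by rw [hEeq]; exact hmeme _ h
      exact Or.inr (Or.inl (Finset.mem_singleton.1 this))
    have hb := aux_final_cfT hn v e a f ha hf i hai hVsub hEsub
    omega
  · -- V = {i}, E = {i+1, i+2}
    have hWsub : ({i} : Finset (ZMod n)) ⊆
        Finset.univ.filter (fun k : ZMod n => v k = 1) := by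
      intro j hj; rw [Finset.mem_singleton.1 hj]; exact hmemv _ hX1
    have hYsub : ({i + 1, i + 2} : Finset (ZMod n)) ⊆
        Finset.univ.filter (fun k : ZMod n => e k = 1) := by
      intro j hj
      rcases Finset.mem_insert.1 hj with rfl | hj
      · exact hmeme _ hei1
      · rw [Finset.mem_singleton.1 hj]; exact hmeme _ hY2
    have hWc : ({i} : Finset (ZMod n)).card = 1 := Finset.card_singleton _
    have hYc : ({i + 1, i + 2} : Finset (ZMod n)).card = 2 := by
      rw [Finset.card_insert_of_notMem (by simpa using d2), Finset.card_singleton]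
    have hV1 := Finset.card_le_card hWsub
    have hE2 := Finset.card_le_card hYsub
    rw [hWc] at hV1; rw [hYc] at hE2
    have hVeq := Finset.eq_of_subset_of_card_le hWsub (by rw [hWc]; omega)
    have hEeq := Finset.eq_of_subset_of_card_le hYsub (by rw [hYc]; omega)
    have hVsub : ∀ j, v j = 1 → j = i ∨ j = i + 2 := by
      intro j h
      have : j ∈ ({i} : Finset (ZMod n)) := by rw [hVeq]; exact hmemv _ h
      exact Or.inl (Finset.mem_singleton.1 this)
    have hEsub : ∀ j, e j = 1 → j = i - 1 ∨ j = i + 1 ∨ j = i + 2 := by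
      intro j h
      have : j ∈ ({i + 1, i + 2} : Finset (ZMod n)) := by rw [hEeq]; exact hmeme _ h
      rcases Finset.mem_insert.1 this with h' | h'
      · exact Or.inr (Or.inl h')
      · exact Or.inr (Or.inr (Finset.mem_singleton.1 h'))
    have hb := aux_final_cfT hn v e a f ha hf i hai hVsub hEsub
    omega
  · -- V = {i+2}, E = {i-1, i+1}
    have hWsub : ({i + 2} : Finset (ZMod n)) ⊆
        Finset.univ.filter (fun k : ZMod n => v k = 1) := by
      intro j hj; rw [Finset.mem_singleton.1 hj]; exact hmemv _ hY1
    have hYsub : ({i - 1, i + 1} : Finset (ZMod n)) ⊆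
        Finset.univ.filter (fun k : ZMod n => e k = 1) := by
      intro j hj
      rcases Finset.mem_insert.1 hj with rfl | hj
      · exact hmeme _ hX2
      · rw [Finset.mem_singleton.1 hj]; exact hmeme _ hei1
    have hWc : ({i + 2} : Finset (ZMod n)).card = 1 := Finset.card_singleton _
    have hYc : ({i - 1, i + 1} : Finset (ZMod n)).card = 2 := by
      rw [Finset.card_insert_of_notMem (by simpa using d3), Finset.card_singleton]
    have hV1 := Finset.card_le_card hWsub
    have hE2 := Finset.card_le_card hYsub
    rw [hWc] at hV1; rw [hYc] at hE2
    have hVeq := Finset.eq_of_subset_of_card_le hWsub (by rw [hWc]; omega)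
    have hEeq := Finset.eq_of_subset_of_card_le hYsub (by rw [hYc]; omega)
    have hVsub : ∀ j, v j = 1 → j = i ∨ j = i + 2 := by
      intro j h
      have : j ∈ ({i + 2} : Finset (ZMod n)) := by rw [hVeq]; exact hmemv _ h
      exact Or.inr (Finset.mem_singleton.1 this)
    have hEsub : ∀ j, e j = 1 → j = i - 1 ∨ j = i + 1 ∨ j = i + 2 := by
      intro j h
      have : j ∈ ({i - 1, i + 1} : Finset (ZMod n)) := by rw [hEeq]; exact hmeme _ h
      rcases Finset.mem_insert.1 this with h' | h'
      · exact Or.inl h'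
      · exact Or.inr (Or.inl (Finset.mem_singleton.1 h'))
    have hb := aux_final_cfT hn v e a f ha hf i hai hVsub hEsub
    omega
  · -- V = ∅, E = {i-1, i+1, i+2}
    have hYsub : ({i - 1, i + 1, i + 2} : Finset (ZMod n)) ⊆
        Finset.univ.filter (fun k : ZMod n => e k = 1) := by
      intro j hj
      rcases Finset.mem_insert.1 hj with rfl | hj
      · exact hmeme _ hX2
      · rcases Finset.mem_insert.1 hj with rfl | hj
        · exact hmeme _ hei1
        · rw [Finset.mem_singleton.1 hj]; exact hmeme _ hY2
    have hE3 := Finset.card_le_card hYsub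
    have hc3 : ({i - 1, i + 1, i + 2} : Finset (ZMod n)).card = 3 := by
      rw [Finset.card_insert_of_notMem (by simp [d3, d4]),
        Finset.card_insert_of_notMem (by simpa using d2), Finset.card_singleton]
    rw [hc3] at hE3
    have hVempty : (Finset.univ.filter (fun k : ZMod n => v k = 1)) = ∅ :=
      Finset.card_eq_zero.1 (by omega)
    have hVsub : ∀ j, v j = 1 → j = i ∨ j = i + 2 := by
      intro j h
      have : j ∈ (∅ : Finset (ZMod n)) := by rw [← hVempty]; exact hmemv _ h
      exact absurd this (Finset.notMem_empty _)
    have hEeq := Finset.eq_of_subset_of_card_le hYsub (by rw [hc3]; omega)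
    have hEsub : ∀ j, e j = 1 → j = i - 1 ∨ j = i + 1 ∨ j = i + 2 := by
      intro j h
      have : j ∈ ({i - 1, i + 1, i + 2} : Finset (ZMod n)) := by rw [hEeq]; exact hmeme _ h
      simpa using this
    have hb := aux_final_cfT hn v e a f ha hf i hai hVsub hEsub
    omega

/-- The basic cycle purification circuit on a cycle with `n ≥ 10` vertices is
combinatorially fault-tolerant up to 3 preparation errors: any set of at most
3 input errors leads to at most that many output errors. -/
theorem cycle_fault_tolerant_up_to_three (n : ℕ) [NeZero n] (hn : 10 ≤ n)
    (v e : ZMod n → ZMod 2) (a f : ZMod n → ZMod 2)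
    (ha : ∀ i : ZMod n, a i = v i + e (i - 1) + e i)
    (hf : ∀ i : ZMod n, f i = e i + a i * a (i + 1))
    (herr : (Finset.univ.filter fun i : ZMod n => v i = 1).card +
        (Finset.univ.filter fun i : ZMod n => e i = 1).card ≤ 3) :
    (Finset.univ.filter fun i : ZMod n => f i = 1).card ≤
      (Finset.univ.filter fun i : ZMod n => v i = 1).card +
        (Finset.univ.filter fun i : ZMod n => e i = 1).card := by
  by_cases hcol : ∃ i : ZMod n, f i = 1 ∧ f (i + 1) = 1 ∧ e i = 0 ∧ v (i + 1) = 0 ∧ e (i + 1) = 1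
  · exact collision_case n hn v e a f ha hf herr hcol
  · exact no_collision v e a f ha hf hcol
end

section
/- Let m ≥ 1, n = 2^(m+1) − 1 and e = 2^m − 1. Let x : Fin n → F₂ have Hamming weight at most e. Let w be the number of indices i with 1 ≤ i ≤ n−1 and x i + x 0 = 1, and let z₀ = x 0 + (C(w, e+1) mod 2) in F₂. Then z₀ = 0. -/
open Finset

lemma lucas_odd (m w : ℕ) (h1 : 2 ^ m ≤ w) (h2 : w < 2 ^ (m + 1)) :
    (w.choose (2 ^ m) : ZMod 2) = 1 := by
  have : Fact (Nat.Prime 2) := ⟨Nat.prime_two⟩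
  have H := Choose.choose_modEq_choose_mul_prod_range_choose (n := w) (k := 2 ^ m) (p := 2) (m + 1)
  have hcast := (ZMod.intCast_eq_intCast_iff _ _ _).mpr H
  have hwdiv : w / 2 ^ m = 1 := by
    rw [pow_succ] at h2
    exact Nat.div_eq_of_lt_le (by simpa using h1) (by omega)
  have hdiv0 : w / 2 ^ (m + 1) = 0 := Nat.div_eq_of_lt h2
  have hdiv0' : 2 ^ m / 2 ^ (m + 1) = 0 :=
    Nat.div_eq_of_lt (Nat.pow_lt_pow_succ one_lt_two)
  have hprod : ∏ i ∈ range (m + 1), Nat.choose (w / 2 ^ i % 2) (2 ^ m / 2 ^ i % 2) = 1 := by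
    rw [prod_range_succ]
    have h1' : ∏ i ∈ range m, Nat.choose (w / 2 ^ i % 2) (2 ^ m / 2 ^ i % 2) = 1 := by
      apply Finset.prod_eq_one
      intro i hi
      rw [mem_range] at hi
      have : 2 ^ m / 2 ^ i = 2 ^ (m - i) := Nat.pow_div hi.le (by norm_num)
      rw [this]
      have : 2 ^ (m - i) % 2 = 0 := by
        have : m - i = (m - i - 1) + 1 := by omega
        rw [this, pow_succ]
        simp [Nat.mul_mod_left]
      rw [this, Nat.choose_zero_right]
    rw [h1', hwdiv, Nat.div_self (Nat.two_pow_pos m)]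
    norm_num
  rw [hdiv0, hdiv0', hprod] at hcast
  simpa using hcast

/-- Correctness of the explicit `(2^(m+1)−1, 1, 2^m−1)` purification circuit:
for any input `x` of Hamming weight at most `e = 2^m − 1`, letting `w` be the
number of indices `i` with `1 ≤ i ≤ n − 1` and `x i + x 0 = 1` (the bits set
after the CNOT stage), the output bit `z₀ = x 0 + C(w, e+1) (mod 2)` on qubit
`0` is `0`. -/
theorem explicit_circuit_correct (m n e : ℕ) (hm : 1 ≤ m)
    (hn : n = 2 ^ (m + 1) - 1) (he : e = 2 ^ m - 1) (h0 : 0 < n)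
    (x : Fin n → ZMod 2) (hx : hammingNorm x ≤ e)
    (w : ℕ)
    (hw : w = (Finset.univ.filter fun i : Fin n =>
        1 ≤ (i : ℕ) ∧ x i + x ⟨0, h0⟩ = 1).card)
    (z₀ : ZMod 2) (hz : z₀ = x ⟨0, h0⟩ + (w.choose (e + 1) : ZMod 2)) :
    z₀ = 0 := by
  have hall : ∀ a : ZMod 2, a = 0 ∨ a = 1 := by decide
  have hnorm : hammingNorm x = (Finset.univ.filter fun i : Fin n => x i ≠ 0).card := rfl
  rcases hall (x ⟨0, h0⟩) with h00 | h01
  · -- x 0 = 0 : w ≤ hammingNorm x ≤ e < e+1 so choose = 0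
    have hsub : (Finset.univ.filter fun i : Fin n =>
        1 ≤ (i : ℕ) ∧ x i + x ⟨0, h0⟩ = 1) ⊆
        (Finset.univ.filter fun i : Fin n => x i ≠ 0) := by
      intro i hi
      simp only [Finset.mem_filter, Finset.mem_univ, true_and, h00, add_zero] at hi ⊢
      rw [hi.2]; exact one_ne_zero
    have hwle : w ≤ e := hw ▸ (Finset.card_le_card hsub).trans (hnorm ▸ hx)
    rw [hz, h00, Nat.choose_eq_zero_of_lt (by omega)]
    simp
  · -- x 0 = 1
    have hne : ∀ a : ZMod 2, a + 1 = 1 ↔ a = 0 := by decide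
    -- the set counted by w is {i ≥ 1 : x i = 0}
    have hw' : w = (Finset.univ.filter fun i : Fin n =>
        1 ≤ (i : ℕ) ∧ x i = 0).card := by
      rw [hw]; congr 1; ext i
      simp [h01, hne]
    -- count of nonzero among i ≥ 1
    set B := (Finset.univ.filter fun i : Fin n => 1 ≤ (i : ℕ) ∧ x i ≠ 0) with hB
    have hsplit : w + B.card = n - 1 := by
      rw [hw', hB, ← Finset.filter_filter, ← Finset.filter_filter,
        Finset.card_filter_add_card_filter_not (fun i => x i = 0)]
      -- card of {i : 1 ≤ i} = n - 1
      have : (Finset.univ.filter fun i : Fin n => 1 ≤ (i : ℕ)).card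
          + (Finset.univ.filter fun i : Fin n => ¬ 1 ≤ (i : ℕ)).card = n := by
        rw [Finset.card_filter_add_card_filter_not]; simp
      have hone : (Finset.univ.filter fun i : Fin n => ¬ 1 ≤ (i : ℕ)).card = 1 := by
        rw [Finset.card_eq_one]
        refine ⟨⟨0, h0⟩, ?_⟩
        ext i
        simp only [Finset.mem_filter, Finset.mem_univ, true_and, Finset.mem_singleton, not_le,
          Nat.lt_one_iff]
        exact ⟨fun h => Fin.ext h, fun h => by simp [h]⟩
      omega
    -- B ∪ {0} ⊆ support, so B.card + 1 ≤ hammingNorm x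
    have hBsub : insert (⟨0, h0⟩ : Fin n) B ⊆
        (Finset.univ.filter fun i : Fin n => x i ≠ 0) := by
      intro i hi
      rcases Finset.mem_insert.mp hi with rfl | hi
      · simp [h01]
      · simp only [hB, Finset.mem_filter] at hi ⊢
        exact ⟨hi.1, hi.2.2⟩
    have h0B : (⟨0, h0⟩ : Fin n) ∉ B := by simp [hB]
    have hcard : B.card + 1 ≤ e := by
      have := Finset.card_le_card hBsub
      rw [Finset.card_insert_of_notMem h0B] at this
      omega
    have hm2 : 2 ^ m ≤ 2 ^ (m + 1) := Nat.pow_le_pow_right (by norm_num) (by omega)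
    have hmpos : 1 ≤ 2 ^ m := Nat.one_le_two_pow
    have hwlb : 2 ^ m ≤ w := by omega
    have hwub : w < 2 ^ (m + 1) := by omega
    have hep : e + 1 = 2 ^ m := by omega
    rw [hz, h01, hep, lucas_odd m w hwlb hwub]
    decide
end
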